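/- Let e_1,...,e_{n-1} be the standard basis of ℝ^{n-1} and e_0 = -(e_1 + ... + e_{n-1}). For u ∈ ℤ^{n-1} and ε ∈ {0,1}^n \ {0} with σ(ε) = {k ∈ [n] : ε_k = 0} = {i_1,...,i_s}, one has lim_{t→0} χ^u(t) = [ε_0 : ... : ε_{n-1}] if and only if u lies in the relative interior of the cone Cone(e_{i_1},...,e_{i_s}). -/
import Mathlib


open Filter

/-- The quotient topology on the complex projective space ℙ(V), induced from
V ∖ {0}. -/
instance projTop (V : Type*) [AddCommGroup V] [Module ℂ V] [TopologicalSpace V] :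
    TopologicalSpace (Projectivization ℂ V) :=
  inferInstanceAs (TopologicalSpace (Quotient (projectivizationSetoid ℂ V)))

namespace Stmt15Aux

/-- The scale-invariant coordinate-magnitude function on projective space. -/
noncomputable def G {n : ℕ} (k : Fin n) : Projectivization ℂ (Fin n → ℂ) → ℝ :=
  Projectivization.lift (fun x => ‖x.1 k‖ / ‖x.1‖) (by
    rintro ⟨a, ha⟩ ⟨b, hb⟩ t rfl
    have ht : t ≠ 0 := by rintro rfl; simp at ha
    simp only [Pi.smul_apply, norm_smul, smul_eq_mul, norm_mul]
    rw [mul_div_mul_left _ _ (norm_ne_zero_iff.2 ht)])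

lemma continuous_G {n : ℕ} (k : Fin n) : Continuous (G k) := by
  refine Continuous.quotient_lift ?_ _
  exact (((continuous_apply k).comp continuous_subtype_val).norm).div
    continuous_subtype_val.norm (fun x => norm_ne_zero_iff.2 x.2)

lemma G_mk {n : ℕ} (k : Fin n) (v : Fin n → ℂ) (hv : v ≠ 0) :
    G k (Projectivization.mk ℂ v hv) = ‖v k‖ / ‖v‖ := rfl

lemma norm_of_zero_one {n : ℕ} (w : Fin n → ℂ) (h01 : ∀ k, w k = 0 ∨ w k = 1)
    (hw : w ≠ 0) : ‖w‖ = 1 := by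
  obtain ⟨k₁, hk₁⟩ := Function.ne_iff.1 hw
  have hk1 : w k₁ = 1 := (h01 k₁).resolve_left hk₁
  refine le_antisymm ?_ ?_
  · rw [pi_norm_le_iff_of_nonneg zero_le_one]
    intro i
    rcases h01 i with h | h <;> simp [h]
  · calc (1:ℝ) = ‖w k₁‖ := by simp [hk1]
      _ ≤ ‖w‖ := norm_le_pi_norm w k₁

lemma G_mk_zero_one {n : ℕ} (k : Fin n) (w : Fin n → ℂ) (h01 : ∀ k, w k = 0 ∨ w k = 1)
    (hw : w ≠ 0) : G k (Projectivization.mk ℂ w hw) = if w k = 0 then 0 else 1 := by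
  rw [G_mk, norm_of_zero_one w h01 hw]
  rcases h01 k with h | h <;> simp [h]

lemma tendsto_aux {n : ℕ} (v : Fin n → ℤ) (μ : ℤ) (hμle : ∀ k, μ ≤ v k)
    (χ : Fin n → ℂ) (hχdef : χ = fun k => if v k = μ then 1 else 0) (hχ : χ ≠ 0)
    (f : ℂ → Projectivization ℂ (Fin n → ℂ))
    (hf : ∀ t : ℂ, (ht : t ≠ 0) → f t = Projectivization.mk ℂ (fun k => t ^ v k)
      (by
        intro h
        obtain ⟨k, -⟩ := Function.ne_iff.1 hχ
        exact zpow_ne_zero (v k) ht (congrFun h k))) :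
    Tendsto f (nhdsWithin 0 {t : ℂ | t ≠ 0}) (nhds (Projectivization.mk ℂ χ hχ)) := by
  have hne : ∀ (t : ℂ), t ≠ 0 → (fun k => t ^ (v k - μ)) ≠ (0 : Fin n → ℂ) := by
    intro t ht h
    obtain ⟨k, -⟩ := Function.ne_iff.1 hχ
    exact zpow_ne_zero (v k - μ) ht (congrFun h k)
  set w : ℂ → { x : Fin n → ℂ // x ≠ 0 } := fun t =>
    if ht : t = 0 then ⟨χ, hχ⟩ else ⟨fun k => t ^ (v k - μ), hne t ht⟩ with hw
  have hwt : Tendsto w (nhdsWithin 0 {t : ℂ | t ≠ 0}) (nhds ⟨χ, hχ⟩) := by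
    rw [tendsto_subtype_rng]
    show Tendsto (fun t => (w t : Fin n → ℂ)) _ (nhds χ)
    rw [tendsto_pi_nhds]
    intro k
    have hev : ∀ᶠ t in nhdsWithin (0:ℂ) {t : ℂ | t ≠ 0},
        ((w t : Fin n → ℂ) k) = t ^ (v k - μ).toNat := by
      filter_upwards [eventually_mem_nhdsWithin] with t (ht : t ≠ 0)
      rw [hw]
      simp only [dif_neg ht]
      rw [← zpow_natCast, Int.toNat_of_nonneg (by linarith [hμle k])]
    refine Tendsto.congr' (EventuallyEq.symm hev) ?_
    by_cases hk : v k = μ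
    · have : (v k - μ).toNat = 0 := by omega
      rw [this]
      simp only [pow_zero, hχdef, if_pos hk]
      exact tendsto_const_nhds
    · have hN : (v k - μ).toNat ≠ 0 := by have := hμle k; omega
      have : χ k = 0 := by rw [hχdef]; simp [hk]
      rw [this]
      have := (continuous_pow (v k - μ).toNat).tendsto (0 : ℂ)
      rw [zero_pow hN] at this
      exact this.mono_left nhdsWithin_le_nhds
  have hcont : Continuous (fun x : { x : Fin n → ℂ // x ≠ 0 } =>
      (Quotient.mk'' x : Projectivization ℂ (Fin n → ℂ))) := continuous_quotient_mk'
  have hT : Tendsto (fun t => (Quotient.mk'' (w t) : Projectivization ℂ (Fin n → ℂ)))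
      (nhdsWithin 0 {t : ℂ | t ≠ 0}) (nhds (Projectivization.mk ℂ χ hχ)) :=
    (hcont.tendsto _).comp hwt
  refine Tendsto.congr' ?_ hT
  filter_upwards [eventually_mem_nhdsWithin] with t (ht : t ≠ 0)
  rw [hf t ht, hw]
  simp only [dif_neg ht]
  show Projectivization.mk ℂ (fun k => t ^ (v k - μ)) (hne t ht) = _
  rw [Projectivization.mk_eq_mk_iff]
  refine ⟨Units.mk0 (t ^ (-μ)) (zpow_ne_zero (-μ) ht), ?_⟩
  funext k
  simp only [Units.smul_def, Pi.smul_apply, smul_eq_mul, Units.val_mk0]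
  rw [← zpow_add₀ ht]
  congr 1
  omega

end Stmt15Aux

namespace Stmt15Aux

lemma sum_apply_formula {m : ℕ} (a : Fin (m + 1) → ℝ) (σ : Finset (Fin (m + 1)))
    (e : Fin (m + 1) → Fin m → ℝ)
    (he : e = Fin.cons (fun _ => -1) fun k => Pi.single k 1) (i : Fin m) :
    (∑ k ∈ σ, a k • e k) i =
      (if (0 : Fin (m + 1)) ∈ σ then -a 0 else 0)
        + (if i.succ ∈ σ then a i.succ else 0) := by
  classical
  have hE0 : e 0 = fun _ => (-1:ℝ) := by rw [he]; exact Fin.cons_zero _ _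
  have hEs : ∀ k : Fin m, e k.succ = Pi.single k 1 := by
    intro k; rw [he]; exact Fin.cons_succ _ _ _
  rw [Finset.sum_apply]
  have h0 : ∑ k ∈ σ, (a k • e k) i
      = ∑ k ∈ Finset.univ, (if k ∈ σ then (a k • e k) i else 0) := by
    rw [Finset.sum_ite_mem, Finset.univ_inter]
  rw [h0, Fin.sum_univ_succ]
  congr 1
  · by_cases h : (0 : Fin (m + 1)) ∈ σ <;> simp [h, hE0]
  · rw [Finset.sum_eq_single i]
    · by_cases h : i.succ ∈ σ <;> simp [h, hEs]
    · intro j _ hji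
      by_cases h : j.succ ∈ σ <;>
        simp [h, hEs, Pi.single_eq_of_ne (Ne.symm hji)]
    · intro h; exact absurd (Finset.mem_univ i) h

end Stmt15Aux


/-- With e_0 = -(e_1 + ... + e_m) and e_1,...,e_m the standard basis of ℝ^m,
for ε ∈ {0,1}^{m+1} ∖ {0} with σ(ε) = {k : ε_k = 0}, the limit as t → 0 of
χ^u(t) = [1 : t^{u_1} : ... : t^{u_m}] equals [ε_0 : ... : ε_m] iff u lies in the
relative interior of Cone(e_k : k ∈ σ(ε)), i.e. u = Σ_{k ∈ σ(ε)} a_k e_k with all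
a_k > 0. -/
theorem stmt_15 (m : ℕ) (hm : 1 ≤ m) (u : Fin m → ℤ)
    (ε : Fin (m + 1) → ℂ) (hε01 : ∀ k, ε k = 0 ∨ ε k = 1) (hεne : ε ≠ 0)
    (e : Fin (m + 1) → Fin m → ℝ)
    (he : e = Fin.cons (fun _ => -1) fun k => Pi.single k 1)
    (σ : Finset (Fin (m + 1))) (hσ : ∀ k, k ∈ σ ↔ ε k = 0)
    (f : ℂ → Projectivization ℂ (Fin (m + 1) → ℂ))
    (hf : ∀ t : ℂ, t ≠ 0 →
      f t = Projectivization.mk ℂ (Fin.cons 1 fun i => t ^ u i)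
        (by
          intro h
          have h0 := congrFun h 0
          rw [Pi.zero_apply, Fin.cons_zero] at h0
          exact one_ne_zero h0)) :
    Tendsto f (nhdsWithin 0 {t : ℂ | t ≠ 0})
        (nhds (Projectivization.mk ℂ ε hεne))
      ↔ ∃ a : Fin (m + 1) → ℝ, (∀ k ∈ σ, 0 < a k) ∧
          (fun i => (u i : ℝ)) = ∑ k ∈ σ, a k • e k := by
  classical
  set v : Fin (m + 1) → ℤ := Fin.cons 0 u with hv
  have hv0 : v 0 = 0 := Fin.cons_zero _ _
  have hvs : ∀ i : Fin m, v i.succ = u i := fun i => Fin.cons_succ _ _ _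
  have hneu : (Finset.univ : Finset (Fin (m + 1))).Nonempty := Finset.univ_nonempty
  set μ : ℤ := Finset.univ.inf' hneu v with hμdef
  have hμle : ∀ k, μ ≤ v k := fun k => Finset.inf'_le v (Finset.mem_univ k)
  obtain ⟨k₀, -, hk₀⟩ := Finset.exists_mem_eq_inf' hneu v
  rw [← hμdef] at hk₀
  set χ : Fin (m + 1) → ℂ := fun k => if v k = μ then 1 else 0 with hχdef
  have hχ01 : ∀ k, χ k = 0 ∨ χ k = 1 := by
    intro k; rw [hχdef]; by_cases h : v k = μ <;> simp [h]
  have hχ : χ ≠ 0 := by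
    intro h
    have := congrFun h k₀
    rw [hχdef] at this
    simp [hk₀.symm] at this
  have hμ0 : μ ≤ 0 := by have := hμle 0; omega
  -- reconcile f with the power form
  have hf' : ∀ t : ℂ, (ht : t ≠ 0) → f t = Projectivization.mk ℂ (fun k => t ^ v k)
      (by
        intro h
        obtain ⟨k, -⟩ := Function.ne_iff.1 hχ
        exact zpow_ne_zero (v k) ht (congrFun h k)) := by
    intro t ht
    rw [hf t ht, Projectivization.mk_eq_mk_iff]
    refine ⟨1, ?_⟩
    funext k
    rw [one_smul]
    induction k using Fin.cases with
    | zero => simp [hv0]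
    | succ i => simp [hvs i]
  have key : Tendsto f (nhdsWithin 0 {t : ℂ | t ≠ 0})
      (nhds (Projectivization.mk ℂ χ hχ)) :=
    Stmt15Aux.tendsto_aux v μ hμle χ hχdef hχ f hf'
  have hNB : (nhdsWithin (0 : ℂ) {t : ℂ | t ≠ 0}).NeBot := by
    have hs : {t : ℂ | t ≠ 0} = {(0 : ℂ)}ᶜ := by ext t; simp
    rw [hs]
    infer_instance
  -- membership criterion via v
  have hmemσ : ∀ k, k ∈ σ ↔ ε k = 0 := hσ
  have hχzero : ∀ k, χ k = 0 ↔ v k ≠ μ := by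
    intro k; rw [hχdef]; by_cases h : v k = μ <;> simp [h]
  have main : Tendsto f (nhdsWithin 0 {t : ℂ | t ≠ 0})
      (nhds (Projectivization.mk ℂ ε hεne)) ↔ ε = χ := by
    constructor
    · intro hT
      funext k
      have h1 : Tendsto (fun t => Stmt15Aux.G k (f t)) (nhdsWithin 0 {t : ℂ | t ≠ 0})
          (nhds (Stmt15Aux.G k (Projectivization.mk ℂ ε hεne))) :=
        ((Stmt15Aux.continuous_G k).tendsto _).comp hT
      have h2 : Tendsto (fun t => Stmt15Aux.G k (f t)) (nhdsWithin 0 {t : ℂ | t ≠ 0})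
          (nhds (Stmt15Aux.G k (Projectivization.mk ℂ χ hχ))) :=
        ((Stmt15Aux.continuous_G k).tendsto _).comp key
      have heq := tendsto_nhds_unique h1 h2
      rw [Stmt15Aux.G_mk_zero_one k ε hε01 hεne,
        Stmt15Aux.G_mk_zero_one k χ hχ01 hχ] at heq
      rcases hε01 k with h | h <;> rcases hχ01 k with h' | h' <;>
        simp [h, h'] at heq ⊢ <;> rw [h, h']
    · intro hεχ
      have hmk : Projectivization.mk ℂ ε hεne = Projectivization.mk ℂ χ hχ := by
        rw [Projectivization.mk_eq_mk_iff]
        exact ⟨1, by rw [one_smul, hεχ]⟩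
      rw [hmk]
      exact key
  rw [main]
  -- now the purely algebraic equivalence
  have hσv : ε = χ → ∀ k, k ∈ σ ↔ v k ≠ μ := by
    intro hεχ k
    rw [hmemσ k, hεχ, hχzero k]
  constructor
  · intro hεχ
    refine ⟨fun k => ((v k - μ : ℤ) : ℝ), ?_, ?_⟩
    · intro k hk
      have hkne : v k ≠ μ := (hσv hεχ k).1 hk
      have h1 : 0 < v k - μ := by have := hμle k; omega
      show (0 : ℝ) < ((v k - μ : ℤ) : ℝ)
      exact_mod_cast h1
    · funext i
      rw [Stmt15Aux.sum_apply_formula _ σ e he i]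
      have h0σ : ((0 : Fin (m + 1)) ∈ σ) ↔ μ ≠ 0 := by
        rw [hσv hεχ 0, hv0]; exact ⟨fun h => fun h' => h (by omega), fun h h' => h (by omega)⟩
      have hiσ : (i.succ ∈ σ) ↔ u i ≠ μ := by rw [hσv hεχ i.succ, hvs i]
      simp only [h0σ, hiσ]
      by_cases hμz : μ = 0
      · by_cases hui : u i = μ
        · rw [if_neg (not_not.2 hμz), if_neg (not_not.2 hui)]
          rw [hui, hμz]
          norm_num
        · rw [if_neg (not_not.2 hμz), if_pos hui]
          show (u i : ℝ) = 0 + ((v i.succ - μ : ℤ) : ℝ)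
          rw [hvs, hμz]
          push_cast
          ring
      · by_cases hui : u i = μ
        · rw [if_pos hμz, if_neg (not_not.2 hui)]
          show (u i : ℝ) = -((v 0 - μ : ℤ) : ℝ) + 0
          rw [hv0, hui]
          push_cast
          ring
        · rw [if_pos hμz, if_pos hui]
          show (u i : ℝ) = -((v 0 - μ : ℤ) : ℝ) + ((v i.succ - μ : ℤ) : ℝ)
          rw [hv0, hvs]
          push_cast
          ring
  · rintro ⟨a, hapos, hsum⟩
    have hform : ∀ i : Fin m, (u i : ℝ)
        = (if (0 : Fin (m + 1)) ∈ σ then -a 0 else 0)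
          + (if i.succ ∈ σ then a i.succ else 0) := by
      intro i
      have := congrFun hsum i
      rwa [Stmt15Aux.sum_apply_formula _ σ e he i] at this
    set b : ℝ := if (0 : Fin (m + 1)) ∈ σ then a 0 else 0 with hbdef
    have hb0 : 0 ≤ b := by
      rw [hbdef]; split_ifs with h
      · exact (hapos 0 h).le
      · rfl
    have hbm : ∀ k, (k ∈ σ → -b < (v k : ℝ)) ∧ (k ∉ σ → (v k : ℝ) = -b) := by
      intro k
      induction k using Fin.cases with
      | zero =>
        rw [hv0]
        constructor
        · intro h
          rw [hbdef, if_pos h]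
          push_cast
          linarith [hapos 0 h]
        · intro h
          rw [hbdef, if_neg h]
          push_cast
          ring
      | succ i =>
        rw [hvs i]
        constructor
        · intro h
          rw [hform i, if_pos h]
          rw [hbdef]
          split_ifs with h0
          · linarith [hapos i.succ h]
          · linarith [hapos i.succ h]
        · intro h
          rw [hform i, if_neg h]
          rw [hbdef]
          split_ifs with h0 <;> ring
    obtain ⟨k₁, hk₁⟩ := Function.ne_iff.1 hεne
    have hk₁σ : k₁ ∉ σ := fun h => hk₁ ((hmemσ k₁).1 h)
    have hμb : (μ : ℝ) = -b := by
      refine le_antisymm ?_ ?_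
      · rw [← (hbm k₁).2 hk₁σ]
        exact_mod_cast hμle k₁
      · rw [hk₀]
        by_cases h : k₀ ∈ σ
        · exact ((hbm k₀).1 h).le
        · exact ((hbm k₀).2 h).ge
    funext k
    have hk : k ∈ σ ↔ v k ≠ μ := by
      constructor
      · intro h hcon
        have := (hbm k).1 h
        rw [hcon] at this
        linarith [hμb]
      · intro h
        by_contra hc
        have h2 := (hbm k).2 hc
        rw [← hμb] at h2
        exact h (by exact_mod_cast h2)
    rw [hχdef]
    by_cases hvk : v k = μ
    · have : k ∉ σ := fun h => (hk.1 h) hvk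
      have hε1 : ε k = 1 := (hε01 k).resolve_left (fun h => this ((hmemσ k).2 h))
      simp [hvk, hε1]
    · have : k ∈ σ := hk.2 hvk
      have hε0 : ε k = 0 := (hmemσ k).1 this
      simp [hvk, hε0]
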